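/- Let α ∈ ℚ \ {0, ±1} and let (t,u) ∈ ℚ² with u² = α²t⁴ - (α²+1)²t² + 4α², u ≠ 0. Define g_α(t) = (t⁴+4)(t⁴(α²-1)²+4t²(α²+1)²+4(α²-1)²)(α²t⁴-(α²+1)²t²+4α²). Then the point ((t⁴+4)(α²+1)²/(4u²), (t²-2)(α²+1)³/(8(α²-1)u⁴)) satisfies g_α(t)·y² = x(x-1)(x+(α²+1)²/(α²-1)²). -/

import Mathlib

theorem stmt_5 (α t u : ℚ) (h0 : α ≠ 0) (h1 : α ≠ 1) (h2 : α ≠ -1)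
    (hu : u^2 = α^2*t^4 - (α^2+1)^2*t^2 + 4*α^2) (hu0 : u ≠ 0) :
    let g := (t^4+4)*(t^4*(α^2-1)^2+4*t^2*(α^2+1)^2+4*(α^2-1)^2)*(α^2*t^4-(α^2+1)^2*t^2+4*α^2)
    let x := (t^4+4)*(α^2+1)^2/(4*u^2)
    let y := (t^2-2)*(α^2+1)^3/(8*(α^2-1)*u^4)
    g * y^2 = x*(x-1)*(x+(α^2+1)^2/(α^2-1)^2) := by
  intro g x y
  have ha : α^2 - 1 ≠ 0 := by
    intro h
    have h' : (α - 1) * (α + 1) = 0 := by linear_combination h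
    rcases mul_eq_zero.mp h' with h' | h'
    · exact h1 (by linarith)
    · exact h2 (by linarith)
  have hP : α^2*t^4 - (α^2+1)^2*t^2 + 4*α^2 ≠ 0 := by
    rw [← hu]; exact pow_ne_zero 2 hu0
  have h4 : u^4 = (α^2*t^4 - (α^2+1)^2*t^2 + 4*α^2)^2 := by
    rw [show (u:ℚ)^4 = (u^2)^2 by ring, hu]
  simp only [g, x, y]
  rw [h4, hu]
  generalize hPdef : α^2*t^4 - (α^2+1)^2*t^2 + 4*α^2 = P at hP ⊢
  field_simp
  subst hPdef
  ring
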